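/- arXiv:2409.06276 — 5 statements merged into one kernel-verified Lean document; each statement's English description precedes it below -/
import Mathlib

section
/- Let h be integrable on [0,T] and Δ = T/M for a positive integer M. Then the Riemann-type sum Δ·∑_{i=1}^{M-1} |h(iΔ)| is bounded above by ∫_0^{T-Δ} |h(s) − h((s)_Δ + Δ)| ds + ∫_0^T |h(s)| ds, where (s)_Δ = ⌊s/Δ⌋·Δ. -/
open MeasureTheory

/-- For `h` integrable on `[0,T]` and `Δ = T/M`, the Riemann-type sum
`Δ·∑_{i=1}^{M-1} |h(iΔ)|` is bounded by
`∫_0^{T-Δ} |h(s) − h((s)_Δ + Δ)| ds + ∫_0^T |h(s)| ds`, where `(s)_Δ = ⌊s/Δ⌋·Δ`. -/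
theorem stmt0 (T : ℝ) (hT : 0 < T) (M : ℕ) (hM : 0 < M) (h : ℝ → ℝ)
    (hint : IntegrableOn h (Set.Icc 0 T)) :
    (T / M) * ∑ i ∈ Finset.Icc 1 (M - 1), |h (i * (T / M))| ≤
      (∫ s in (0:ℝ)..(T - T / M), |h s - h ((⌊s / (T / M)⌋ : ℝ) * (T / M) + T / M)|) +
        ∫ s in (0:ℝ)..T, |h s| := by
  have hMR : (0:ℝ) < M := by exact_mod_cast hM
  set Δ : ℝ := T / M with hΔdef
  have hΔ : 0 < Δ := div_pos hT hMR
  set g : ℝ → ℝ := fun s => h ((⌊s / Δ⌋ : ℝ) * Δ + Δ) with hgdef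
  set a : ℕ → ℝ := fun k => (k : ℝ) * Δ with hadef
  have ha_lt : ∀ k : ℕ, a k < a (k + 1) := by
    intro k
    simp only [hadef, Nat.cast_add, Nat.cast_one]
    nlinarith
  have hfloor : ∀ k : ℕ, ∀ s ∈ Set.Ioo (a k) (a (k + 1)), (⌊s / Δ⌋ : ℝ) = (k : ℝ) := by
    intro k s hs
    have h1 : (k : ℝ) ≤ s / Δ := by
      rw [le_div_iff₀ hΔ]
      exact le_of_lt hs.1
    have h2 : s / Δ < (k : ℝ) + 1 := by
      rw [div_lt_iff₀ hΔ]
      have := hs.2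
      simp only [hadef, Nat.cast_add, Nat.cast_one] at this
      linarith
    have : ⌊s / Δ⌋ = (k : ℤ) := by
      rw [Int.floor_eq_iff]
      constructor <;> push_cast <;> [exact h1; exact h2]
    rw [this]; push_cast; ring
  have hg_eq : ∀ k : ℕ, ∀ s ∈ Set.Ioo (a k) (a (k + 1)), g s = h (a (k + 1)) := by
    intro k s hs
    simp only [hgdef]
    rw [hfloor k s hs]
    congr 1
    simp only [hadef]
    push_cast; ring
  -- a.e. equality on each Ioc piece
  have hae : ∀ k : ℕ, g =ᵐ[volume.restrict (Set.Ioc (a k) (a (k + 1)))]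
      fun _ => h (a (k + 1)) := by
    intro k
    have h1 : ∀ᵐ s : ℝ ∂volume, s ≠ a (k + 1) := by
      rw [ae_iff]
      simp only [ne_eq, not_not, Set.setOf_eq_eq_singleton]
      exact measure_singleton _
    rw [Filter.EventuallyEq, ae_restrict_iff' measurableSet_Ioc]
    filter_upwards [h1] with s hs hmem
    exact hg_eq k s ⟨hmem.1, lt_of_le_of_ne hmem.2 hs⟩
  have hsub : ∀ k : ℕ, k + 1 ≤ M → Set.Ioc (a k) (a (k + 1)) ⊆ Set.Icc 0 T := by
    intro k hk s hs
    constructor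
    · have : (0:ℝ) ≤ a k := by
        simp only [hadef]; positivity
      linarith [hs.1]
    · have : a (k + 1) ≤ T := by
        simp only [hadef]
        have : ((k:ℝ) + 1) ≤ (M : ℝ) := by exact_mod_cast hk
        calc ((k+1 : ℕ) : ℝ) * Δ ≤ (M : ℝ) * Δ := by
              apply mul_le_mul_of_nonneg_right _ (le_of_lt hΔ)
              push_cast; linarith
          _ = T := by rw [hΔdef]; field_simp
      linarith [hs.2]
  have hInt_h : ∀ k : ℕ, k + 1 ≤ M → IntegrableOn h (Set.Ioc (a k) (a (k + 1))) := by
    intro k hk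
    exact hint.mono_set (hsub k hk)
  have hmeas_fin : ∀ k : ℕ, volume (Set.Ioc (a k) (a (k + 1))) < ⊤ := by
    intro k
    rw [Real.volume_Ioc]
    exact ENNReal.ofReal_lt_top
  have hInt_g : ∀ k : ℕ, IntegrableOn g (Set.Ioc (a k) (a (k + 1))) := by
    intro k
    exact (integrableOn_const (hmeas_fin k).ne).congr (hae k).symm
  -- piece: integral of |g| equals Δ * |h (a (k+1))|
  have hIeq : ∀ k : ℕ, (∫ s in a k..a (k + 1), |g s|) = Δ * |h (a (k + 1))| := by
    intro k
    rw [intervalIntegral.integral_of_le (le_of_lt (ha_lt k))]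
    have : (∫ s in Set.Ioc (a k) (a (k + 1)), |g s|) =
        ∫ _ in Set.Ioc (a k) (a (k + 1)), |h (a (k + 1))| := by
      apply integral_congr_ae
      filter_upwards [hae k] with s hs
      rw [hs]
    rw [this, setIntegral_const, Real.volume_real_Ioc_of_le (le_of_lt (ha_lt k)), smul_eq_mul]
    congr 1
    simp only [hadef]
    push_cast; ring
  -- piece inequality
  have hpiece : ∀ k : ℕ, k + 1 ≤ M →
      (∫ s in a k..a (k + 1), |g s|) ≤
        (∫ s in a k..a (k + 1), |h s - g s|) + ∫ s in a k..a (k + 1), |h s| := by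
    intro k hk
    rw [intervalIntegral.integral_of_le (le_of_lt (ha_lt k)),
      intervalIntegral.integral_of_le (le_of_lt (ha_lt k)),
      intervalIntegral.integral_of_le (le_of_lt (ha_lt k))]
    have ihg : IntegrableOn (fun s => |h s - g s|) (Set.Ioc (a k) (a (k + 1))) :=
      ((hInt_h k hk).sub (hInt_g k)).abs
    have ih : IntegrableOn (fun s => |h s|) (Set.Ioc (a k) (a (k + 1))) :=
      (hInt_h k hk).abs
    have ig : IntegrableOn (fun s => |g s|) (Set.Ioc (a k) (a (k + 1))) :=
      (hInt_g k).abs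
    rw [← integral_add ihg ih]
    apply integral_mono ig (ihg.add ih)
    intro s
    calc |g s| = |g s - h s + h s| := by congr 1; ring
      _ ≤ |g s - h s| + |h s| := abs_add_le _ _
      _ = |h s - g s| + |h s| := by rw [abs_sub_comm]
  -- interval integrability over each piece
  have hII1 : ∀ k < M - 1, IntervalIntegrable (fun s => |h s - g s|) volume (a k) (a (k + 1)) := by
    intro k hk
    rw [intervalIntegrable_iff_integrableOn_Ioc_of_le (le_of_lt (ha_lt k))]
    exact ((hInt_h k (by omega)).sub (hInt_g k)).abs
  have hII2 : ∀ k < M - 1, IntervalIntegrable (fun s => |h s|) volume (a k) (a (k + 1)) := by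
    intro k hk
    rw [intervalIntegrable_iff_integrableOn_Ioc_of_le (le_of_lt (ha_lt k))]
    exact (hInt_h k (by omega)).abs
  have ha0 : a 0 = 0 := by simp [hadef]
  have haM : a (M - 1) = T - T / M := by
    simp only [hadef]
    rw [Nat.cast_sub hM]
    push_cast
    rw [sub_mul, one_mul, hΔdef]
    field_simp
  -- sum of pieces
  have hsum1 : ∑ k ∈ Finset.range (M - 1), (∫ s in a k..a (k + 1), |h s - g s|) =
      ∫ s in (0:ℝ)..(T - T / M), |h s - g s| := by
    rw [intervalIntegral.sum_integral_adjacent_intervals hII1, ha0, haM]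
  have hsum2 : ∑ k ∈ Finset.range (M - 1), (∫ s in a k..a (k + 1), |h s|) =
      ∫ s in (0:ℝ)..(T - T / M), |h s| := by
    rw [intervalIntegral.sum_integral_adjacent_intervals hII2, ha0, haM]
  -- LHS as sum
  have hLHS : Δ * ∑ i ∈ Finset.Icc 1 (M - 1), |h ((i : ℝ) * Δ)| =
      ∑ k ∈ Finset.range (M - 1), Δ * |h (a (k + 1))| := by
    rw [Finset.mul_sum]
    have : Finset.Icc 1 (M - 1) = Finset.Ico 1 M := by
      rw [← Finset.Ico_add_one_right_eq_Icc]
      congr 1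
      omega
    rw [this, Finset.sum_Ico_eq_sum_range]
    apply Finset.sum_congr rfl
    intro k _
    congr 2
    simp only [hadef]
    push_cast; ring
  have key : Δ * ∑ i ∈ Finset.Icc 1 (M - 1), |h ((i : ℝ) * Δ)| ≤
      (∫ s in (0:ℝ)..(T - T / M), |h s - g s|) + ∫ s in (0:ℝ)..(T - T / M), |h s| := by
    rw [hLHS, ← hsum1, ← hsum2, ← Finset.sum_add_distrib]
    apply Finset.sum_le_sum
    intro k hk
    rw [← hIeq k]
    exact hpiece k (by simp at hk; omega)
  have hlast : (∫ s in (0:ℝ)..(T - T / M), |h s|) ≤ ∫ s in (0:ℝ)..T, |h s| := by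
    apply intervalIntegral.integral_mono_interval (le_refl (0:ℝ))
    · have : Δ ≤ T := by
        rw [hΔdef, div_le_iff₀ hMR]
        nlinarith [hMR, (by exact_mod_cast hM : (1:ℝ) ≤ M)]
      linarith
    · linarith
    · filter_upwards with s using abs_nonneg _
    · rw [intervalIntegrable_iff_integrableOn_Ioc_of_le (le_of_lt hT)]
      exact (hint.mono_set Set.Ioc_subset_Icc_self).abs
  calc Δ * ∑ i ∈ Finset.Icc 1 (M - 1), |h ((i : ℝ) * Δ)| ≤
      (∫ s in (0:ℝ)..(T - T / M), |h s - g s|) + ∫ s in (0:ℝ)..(T - T / M), |h s| := key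
    _ ≤ (∫ s in (0:ℝ)..(T - T / M), |h s - g s|) + ∫ s in (0:ℝ)..T, |h s| := by linarith
end

section
/- Let h : [0,T] → ℝ have finite p-variation for some p ≥ 1, and let 0 < ε ≤ Δ ≤ T. Then ∫_0^T |h((t+ε) ∧ T) − h(t)| dt ≤ K · ‖h‖_{p-var,T} · (T^{(p−1)/p} ε^{1/p} + ε) for a universal constant K independent of T, h, ε and Δ. -/
open MeasureTheory

/-- The set of candidate values `(∑ |h(t_{i+1})−h(t_i)|^p)^{1/p}` over finite
partitions `0 = t_0 < t_1 < ... < t_n = T` of `[0,T]`. -/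
def pVarSet (p T : ℝ) (h : ℝ → ℝ) : Set ℝ :=
  {v : ℝ | ∃ (n : ℕ) (t : ℕ → ℝ), 0 < n ∧ t 0 = 0 ∧ t n = T ∧
    (∀ i < n, t i < t (i + 1)) ∧
    v = (∑ i ∈ Finset.range n, |h (t (i + 1)) - h (t i)| ^ p) ^ (1 / p)}

/-- The `p`-variation seminorm of `h` on `[0,T]`. -/
noncomputable def pVarNorm (p T : ℝ) (h : ℝ → ℝ) : ℝ := sSup (pVarSet p T h)

open scoped NNReal

lemma pVarNorm_nonneg {p T : ℝ} {h : ℝ → ℝ} (hT : 0 < T) (hb : BddAbove (pVarSet p T h)) :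
    0 ≤ pVarNorm p T h := by
  set t : ℕ → ℝ := fun i => if i = 0 then 0 else T with ht
  have hmem : (∑ i ∈ Finset.range 1, |h (t (i + 1)) - h (t i)| ^ p) ^ (1 / p) ∈ pVarSet p T h := by
    refine ⟨1, t, one_pos, rfl, rfl, ?_, rfl⟩
    intro i hi
    interval_cases i
    simpa [ht] using hT
  refine le_trans ?_ (le_csSup hb hmem)
  positivity

lemma real_rpow_add_le {x y θ : ℝ} (hx : 0 ≤ x) (hy : 0 ≤ y) (h0 : 0 ≤ θ) (h1 : θ ≤ 1) :
    (x + y) ^ θ ≤ x ^ θ + y ^ θ := by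
  have H := NNReal.rpow_add_le_add_rpow x.toNNReal y.toNNReal h0 h1
  calc (x + y) ^ θ = ((x.toNNReal + y.toNNReal : ℝ≥0) : ℝ) ^ θ := by
        rw [NNReal.coe_add, Real.coe_toNNReal _ hx, Real.coe_toNNReal _ hy]
    _ = (((x.toNNReal + y.toNNReal) ^ θ : ℝ≥0) : ℝ) := (NNReal.coe_rpow _ _).symm
    _ ≤ ((x.toNNReal ^ θ + y.toNNReal ^ θ : ℝ≥0) : ℝ) := by exact_mod_cast H
    _ = x ^ θ + y ^ θ := by
        rw [NNReal.coe_add, NNReal.coe_rpow, NNReal.coe_rpow, Real.coe_toNNReal _ hx,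
          Real.coe_toNNReal _ hy]

lemma holder_sum {M : ℕ} {a : ℕ → ℝ} (ha : ∀ k, 0 ≤ a k) {p : ℝ} (hp : 1 ≤ p) (hM : 1 ≤ M) :
    ∑ k ∈ Finset.range M, a k ≤
      (M : ℝ) ^ ((p - 1) / p) * (∑ k ∈ Finset.range M, a k ^ p) ^ (1 / p) := by
  have hp0 : (0:ℝ) < p := lt_of_lt_of_le one_pos hp
  have hMpos : (0:ℝ) < (M:ℝ) := by exact_mod_cast hM
  have key := Real.arith_mean_le_rpow_mean (Finset.range M) (fun _ => (M:ℝ)⁻¹) a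
    (fun i _ => by positivity) (by simp [Finset.sum_const, mul_comm]; field_simp)
    (fun i _ => ha i) hp
  -- key : ∑ (1/M) * a ≤ (∑ (1/M) * a^p) ^ (1/p)
  rw [← Finset.mul_sum, ← Finset.mul_sum] at key
  have h1 : ∑ k ∈ Finset.range M, a k ≤ (M:ℝ) * ((M:ℝ)⁻¹ * ∑ k ∈ Finset.range M, a k ^ p) ^ (1/p) := by
    calc ∑ k ∈ Finset.range M, a k = (M:ℝ) * ((M:ℝ)⁻¹ * ∑ k ∈ Finset.range M, a k) := by
          field_simp
      _ ≤ _ := by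
          apply mul_le_mul_of_nonneg_left key hMpos.le
  refine h1.trans (le_of_eq ?_)
  have hS : (0:ℝ) ≤ ∑ k ∈ Finset.range M, a k ^ p :=
    Finset.sum_nonneg fun i _ => Real.rpow_nonneg (ha i) p
  rw [Real.mul_rpow (by positivity) hS, ← mul_assoc]
  congr 1
  rw [← Real.rpow_neg_one (M:ℝ), ← Real.rpow_mul hMpos.le, neg_one_mul]
  have hexp : (1:ℝ) + -(1/p) = (p-1)/p := by field_simp; ring
  calc (M:ℝ) * (M:ℝ) ^ (-(1/p)) = (M:ℝ) ^ (1:ℝ) * (M:ℝ) ^ (-(1/p)) := by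
        rw [Real.rpow_one]
    _ = (M:ℝ) ^ ((1:ℝ) + -(1/p)) := (Real.rpow_add hMpos _ _).symm
    _ = (M:ℝ) ^ ((p-1)/p) := by rw [hexp]

lemma sum_rpow_le {p T ε : ℝ} {h : ℝ → ℝ} (hp : 1 ≤ p) (hT : 0 < T) (hε : 0 < ε)
    (hbdd : BddAbove (pVarSet p T h)) {M : ℕ} (hM : T ≤ M * ε) {s : ℝ}
    (hs0 : 0 < s) (hsT : s < T) :
    (∑ k ∈ Finset.range M, |h (min (s + k * ε + ε) T) - h (min (s + k * ε) T)| ^ p) ^ (1 / p)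
      ≤ pVarNorm p T h := by
  have hp0 : (0:ℝ) < p := lt_of_lt_of_le one_pos hp
  set j := ⌈(T - s) / ε⌉₊ with hjdef
  have hx0 : (0:ℝ) < (T - s) / ε := div_pos (by linarith) hε
  have hj1 : 1 ≤ j := Nat.one_le_ceil_iff.mpr hx0
  have hjε : T ≤ s + j * ε := by
    have h1 := Nat.le_ceil ((T - s) / ε)
    rw [div_le_iff₀ hε] at h1
    linarith
  have hjlt : s + ((j:ℝ) - 1) * ε < T := by
    have h1 := Nat.ceil_lt_add_one hx0.le
    have h2 : ((j:ℝ) - 1) * ε < T - s := by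
      rw [← lt_div_iff₀ hε]
      linarith
    linarith
  have hjM : j ≤ M := by
    rw [hjdef]
    apply Nat.ceil_le.mpr
    rw [div_le_iff₀ hε]
    nlinarith
  set t : ℕ → ℝ := fun i => if i = 0 then 0 else min (s + ((i:ℝ) - 1) * ε) T with htdef
  have ht_succ : ∀ k : ℕ, t (k + 1) = min (s + (k:ℝ) * ε) T := by
    intro k
    have e : ((k + 1 : ℕ) : ℝ) - 1 = (k : ℝ) := by push_cast; ring
    simp only [htdef, Nat.succ_ne_zero, if_false, e]
  have hmono : ∀ i, i < j + 1 → t i < t (i + 1) := by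
    intro i hi
    rcases Nat.eq_zero_or_pos i with rfl | hipos
    · have h1 : t 1 = s := by
        rw [ht_succ 0]
        push_cast
        rw [zero_mul, add_zero, min_eq_left hsT.le]
      have h0 : t 0 = 0 := by simp [htdef]
      rw [h0, h1]; exact hs0
    · have hij : i ≤ j := by omega
      have hlti : s + ((i:ℝ) - 1) * ε < T := by
        have : ((i:ℝ) - 1) * ε ≤ ((j:ℝ) - 1) * ε := by
          have : (i:ℝ) ≤ (j:ℝ) := by exact_mod_cast hij
          nlinarith
        linarith
      have hti : t i = s + ((i:ℝ) - 1) * ε := by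
        rw [htdef]
        simp only [Nat.pos_iff_ne_zero.mp hipos, if_false]
        exact min_eq_left hlti.le
      rw [hti, ht_succ i]
      apply lt_min
      · nlinarith
      · exact hlti
  set P : ℕ → ℝ := fun i => |h (t (i + 1)) - h (t i)| ^ p with hPdef
  have hPnn : ∀ i : ℕ, 0 ≤ P i := fun i => Real.rpow_nonneg (abs_nonneg _) p
  have hterm : ∀ k : ℕ, |h (min (s + (k:ℝ) * ε + ε) T) - h (min (s + (k:ℝ) * ε) T)| ^ p
      = P (k + 1) := by
    intro k
    have e1 : t (k + 1 + 1) = min (s + (k:ℝ) * ε + ε) T := by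
      rw [ht_succ (k+1)]
      have : ((k + 1 : ℕ) : ℝ) * ε = (k:ℝ) * ε + ε := by push_cast; ring
      rw [this, ← add_assoc]
    have e2 : t (k + 1) = min (s + (k:ℝ) * ε) T := ht_succ k
    rw [hPdef]
    simp only [e1, e2]
  have hPtop : ∀ i, j + 1 ≤ i → P i = 0 := by
    intro i hi
    obtain ⟨k, rfl⟩ : ∃ k, i = k + 1 := ⟨i - 1, by omega⟩
    have hk : j ≤ k := by omega
    have hkR : (j:ℝ) ≤ (k:ℝ) := by exact_mod_cast hk
    have htk : t (k + 1) = T := by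
      rw [ht_succ k, min_eq_right]; nlinarith
    have htk1 : t (k + 1 + 1) = T := by
      rw [ht_succ (k+1), min_eq_right]
      push_cast
      nlinarith
    rw [hPdef]
    simp only [htk, htk1, sub_self, abs_zero]
    exact Real.zero_rpow hp0.ne'
  have hS1 : ∑ k ∈ Finset.range M, P (k + 1) = ∑ i ∈ Finset.Ico 1 (M + 1), P i := by
    rw [Finset.sum_Ico_eq_sum_range]
    simp [add_comm]
  have hS2 : ∑ i ∈ Finset.Ico 1 (M + 1), P i
      = ∑ i ∈ Finset.Ico 1 (j + 1), P i + ∑ i ∈ Finset.Ico (j + 1) (M + 1), P i :=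
    (Finset.sum_Ico_consecutive _ (by omega) (by omega)).symm
  have hS3 : ∑ i ∈ Finset.Ico (j + 1) (M + 1), P i = 0 :=
    Finset.sum_eq_zero fun i hi => hPtop i (Finset.mem_Ico.mp hi).1
  have hS4 : ∑ i ∈ Finset.Ico 1 (j + 1), P i ≤ ∑ i ∈ Finset.range (j + 1), P i := by
    rw [Finset.range_eq_Ico]
    exact Finset.sum_le_sum_of_subset_of_nonneg
      (Finset.Ico_subset_Ico (by omega) le_rfl) (fun i _ _ => hPnn i)
  have hmem : (∑ i ∈ Finset.range (j + 1), P i) ^ (1 / p) ∈ pVarSet p T h := by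
    refine ⟨j + 1, t, by omega, by simp [htdef], ?_, hmono, rfl⟩
    rw [ht_succ j, min_eq_right]
    linarith
  calc (∑ k ∈ Finset.range M, |h (min (s + (k:ℝ) * ε + ε) T) - h (min (s + (k:ℝ) * ε) T)| ^ p) ^ (1/p)
      = (∑ k ∈ Finset.range M, P (k + 1)) ^ (1/p) := by
        rw [Finset.sum_congr rfl fun k _ => hterm k]
    _ ≤ (∑ i ∈ Finset.range (j + 1), P i) ^ (1/p) := by
        apply Real.rpow_le_rpow (Finset.sum_nonneg fun i _ => hPnn _)
        · rw [hS1, hS2, hS3, add_zero]; exact hS4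
        · positivity
    _ ≤ pVarNorm p T h := le_csSup hbdd hmem

lemma eps_bound {p T ε : ℝ} (hp : 1 ≤ p) (hT : 0 < T) (hε : 0 < ε) (hεT : ε ≤ T) :
    ((⌈T / ε⌉₊ : ℝ)) ^ ((p - 1) / p) * ε ≤ T ^ ((p - 1) / p) * ε ^ (1 / p) + ε := by
  have hp0 : (0:ℝ) < p := lt_of_lt_of_le one_pos hp
  set θ := (p - 1) / p with hθ
  have hθ0 : 0 ≤ θ := div_nonneg (by linarith) hp0.le
  have hθ1 : θ ≤ 1 := by rw [hθ, div_le_one hp0]; linarith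
  have hceil : ((⌈T / ε⌉₊ : ℝ)) ≤ T / ε + 1 := (Nat.ceil_lt_add_one (by positivity)).le
  have h1 : ((⌈T / ε⌉₊ : ℝ)) ^ θ ≤ (T / ε + 1) ^ θ :=
    Real.rpow_le_rpow (by positivity) hceil hθ0
  have h2 : (T / ε + 1) ^ θ ≤ (T / ε) ^ θ + 1 := by
    have := real_rpow_add_le (x := T / ε) (y := 1) (by positivity) zero_le_one hθ0 hθ1
    rwa [Real.one_rpow] at this
  have hεθ : (0:ℝ) < ε ^ θ := Real.rpow_pos_of_pos hε θ
  have e2 : (1:ℝ) - θ = 1 / p := by rw [hθ]; field_simp; ring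
  have e : ε ^ ((1:ℝ) - θ) = ε ^ (1:ℝ) / ε ^ θ := Real.rpow_sub hε 1 θ
  have h3 : (T / ε) ^ θ * ε = T ^ θ * ε ^ (1 / p) := by
    rw [Real.div_rpow hT.le hε.le, ← e2, e, Real.rpow_one]
    field_simp
  have h4 : ((⌈T / ε⌉₊ : ℝ)) ^ θ * ε ≤ ((T / ε) ^ θ + 1) * ε :=
    mul_le_mul_of_nonneg_right (h1.trans h2) hε.le
  nlinarith [h3, h4]

/-- if `h` has finite `p`-variation on `[0,T]` (`p ≥ 1`) and
`0 < ε ≤ Δ ≤ T`, then `∫_0^T |h((t+ε) ∧ T) − h(t)| dt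
  ≤ K·‖h‖_{p-var,T}·(T^{(p−1)/p} ε^{1/p} + ε)` for a universal constant `K`
independent of `T`, `h`, `ε` and `Δ`. -/
theorem stmt1 :
    ∃ K > (0:ℝ), ∀ (p T ε Δ : ℝ) (h : ℝ → ℝ), 1 ≤ p → 0 < T → 0 < ε → ε ≤ Δ → Δ ≤ T →
      BddAbove (pVarSet p T h) →
      (∫ t in (0:ℝ)..T, |h (min (t + ε) T) - h t|) ≤
        K * pVarNorm p T h * (T ^ ((p - 1) / p) * ε ^ (1 / p) + ε) := by
  refine ⟨1, one_pos, ?_⟩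
  intro p T ε Δ h hp hT hε hεΔ hΔT hbdd
  have hεT : ε ≤ T := hεΔ.trans hΔT
  have hp0 : (0:ℝ) < p := lt_of_lt_of_le one_pos hp
  have hN : 0 ≤ pVarNorm p T h := pVarNorm_nonneg hT hbdd
  have hRHS : 0 ≤ 1 * pVarNorm p T h * (T ^ ((p - 1) / p) * ε ^ (1 / p) + ε) := by
    have : (0:ℝ) ≤ T ^ ((p - 1) / p) * ε ^ (1 / p) + ε := by positivity
    rw [one_mul]
    exact mul_nonneg hN this
  set f : ℝ → ℝ := fun u => |h (min (u + ε) T) - h (min u T)| with hf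
  have hcong : (∫ u in (0:ℝ)..T, |h (min (u + ε) T) - h u|) = ∫ u in (0:ℝ)..T, f u := by
    apply intervalIntegral.integral_congr
    intro u hu
    rw [Set.uIcc_of_le hT.le] at hu
    simp only [hf]
    rw [min_eq_left hu.2]
  rw [hcong]
  by_cases hInt : IntervalIntegrable f volume 0 T
  swap
  · rw [intervalIntegral.integral_undef hInt]; exact hRHS
  set M := ⌈T / ε⌉₊ with hMdef
  have hM1 : 1 ≤ M := Nat.one_le_ceil_iff.mpr (div_pos hT hε)
  have hM : T ≤ (M:ℝ) * ε := (div_le_iff₀ hε).mp (Nat.le_ceil _)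
  have hTM' : T ≤ (M:ℝ) * ε := hM
  have hf0 : ∀ u, T ≤ u → f u = 0 := by
    intro u hu
    simp only [hf]
    rw [min_eq_right (by linarith), min_eq_right hu, sub_self, abs_zero]
  have hIntTM : IntervalIntegrable f volume T ((M:ℝ) * ε) := by
    apply (intervalIntegrable_const (c := (0:ℝ))).congr
    intro u hu
    rw [Set.uIoc_of_le hTM'] at hu
    exact (hf0 u hu.1.le).symm
  have hInt0M : IntervalIntegrable f volume 0 ((M:ℝ) * ε) := hInt.trans hIntTM
  set a : ℕ → ℝ := fun k => (k:ℝ) * ε with ha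
  have hIk : ∀ k, k < M → IntervalIntegrable f volume (a k) (a (k+1)) := by
    intro k hk
    apply hInt0M.mono_set
    have hkM : ((k:ℝ) + 1) ≤ (M:ℝ) := by exact_mod_cast hk
    rw [Set.uIcc_of_le, Set.uIcc_of_le]
    · apply Set.Icc_subset_Icc
      · simp only [ha]; positivity
      · simp only [ha]; push_cast; nlinarith
    · positivity
    · simp only [ha]; push_cast; nlinarith
  have hsum : ∑ k ∈ Finset.range M, ∫ u in a k..a (k+1), f u = ∫ u in (0:ℝ)..((M:ℝ)*ε), f u :=
    (intervalIntegral.sum_integral_adjacent_intervals hIk).trans (by norm_num [ha])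
  have hTM : ∫ u in (0:ℝ)..((M:ℝ)*ε), f u = ∫ u in (0:ℝ)..T, f u := by
    rw [← intervalIntegral.integral_add_adjacent_intervals hInt hIntTM]
    have hz : ∫ u in T..((M:ℝ)*ε), f u = 0 := by
      have : ∫ u in T..((M:ℝ)*ε), f u = ∫ u in T..((M:ℝ)*ε), (0:ℝ) := by
        apply intervalIntegral.integral_congr
        intro u hu
        rw [Set.uIcc_of_le hTM'] at hu
        exact hf0 u hu.1
      rw [this, intervalIntegral.integral_zero]
    rw [hz, add_zero]
  have hshift : ∀ k : ℕ, (∫ u in a k..a (k+1), f u) = ∫ s in (0:ℝ)..ε, f (s + (k:ℝ)*ε) := by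
    intro k
    rw [intervalIntegral.integral_comp_add_right]
    congr 1
    · simp [ha]
    · simp only [ha]; push_cast; ring
  have hIkshift : ∀ k ∈ Finset.range M,
      IntervalIntegrable (fun s => f (s + (k:ℝ)*ε)) volume 0 ε := by
    intro k hk
    have H := (hIk k (Finset.mem_range.mp hk)).comp_add_right ((k:ℝ)*ε)
    have e1 : a k - (k:ℝ)*ε = 0 := by simp [ha]
    have e2 : a (k+1) - (k:ℝ)*ε = ε := by simp only [ha]; push_cast; ring
    rwa [e1, e2] at H
  have hswap : ∑ k ∈ Finset.range M, ∫ s in (0:ℝ)..ε, f (s + (k:ℝ)*ε)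
      = ∫ s in (0:ℝ)..ε, ∑ k ∈ Finset.range M, f (s + (k:ℝ)*ε) :=
    (intervalIntegral.integral_finset_sum hIkshift).symm
  have hbound : ∀ s ∈ Set.uIoc (0:ℝ) ε, ‖∑ k ∈ Finset.range M, f (s + (k:ℝ)*ε)‖
      ≤ (M:ℝ) ^ ((p-1)/p) * pVarNorm p T h := by
    intro s hs
    rw [Set.uIoc_of_le hε.le] at hs
    have hsum_nn : 0 ≤ ∑ k ∈ Finset.range M, f (s + (k:ℝ)*ε) :=
      Finset.sum_nonneg fun k _ => abs_nonneg _
    rw [Real.norm_eq_abs, abs_of_nonneg hsum_nn]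
    by_cases hsT : s < T
    · have H1 := holder_sum (a := fun k => f (s + (k:ℝ)*ε)) (fun k => abs_nonneg _) hp hM1
      refine H1.trans ?_
      apply mul_le_mul_of_nonneg_left ?_ (by positivity)
      have H2 := sum_rpow_le hp hT hε hbdd hM hs.1 hsT
      simp only [hf]
      exact H2
    · push_neg at hsT
      have hz : ∑ k ∈ Finset.range M, f (s + (k:ℝ)*ε) = 0 :=
        Finset.sum_eq_zero fun k _ => hf0 _ (by nlinarith [hε.le, (Nat.cast_nonneg k : (0:ℝ) ≤ k)])
      rw [hz]
      exact mul_nonneg (by positivity) hN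
  have hfinal : ‖∫ s in (0:ℝ)..ε, ∑ k ∈ Finset.range M, f (s + (k:ℝ)*ε)‖
      ≤ ((M:ℝ) ^ ((p-1)/p) * pVarNorm p T h) * |ε - 0| :=
    intervalIntegral.norm_integral_le_of_norm_le_const hbound
  calc ∫ u in (0:ℝ)..T, f u = ∫ u in (0:ℝ)..((M:ℝ)*ε), f u := hTM.symm
    _ = ∑ k ∈ Finset.range M, ∫ u in a k..a (k+1), f u := hsum.symm
    _ = ∑ k ∈ Finset.range M, ∫ s in (0:ℝ)..ε, f (s + (k:ℝ)*ε) :=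
        Finset.sum_congr rfl fun k _ => hshift k
    _ = ∫ s in (0:ℝ)..ε, ∑ k ∈ Finset.range M, f (s + (k:ℝ)*ε) := hswap
    _ ≤ ‖∫ s in (0:ℝ)..ε, ∑ k ∈ Finset.range M, f (s + (k:ℝ)*ε)‖ := by
        rw [Real.norm_eq_abs]; exact le_abs_self _
    _ ≤ ((M:ℝ) ^ ((p-1)/p) * pVarNorm p T h) * |ε - 0| := hfinal
    _ = pVarNorm p T h * ((M:ℝ) ^ ((p-1)/p) * ε) := by
        rw [sub_zero, abs_of_pos hε]; ring
    _ ≤ pVarNorm p T h * (T ^ ((p-1)/p) * ε ^ (1/p) + ε) :=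
        mul_le_mul_of_nonneg_left (eps_bound hp hT hε hεT) hN
    _ = 1 * pVarNorm p T h * (T ^ ((p-1)/p) * ε ^ (1/p) + ε) := by ring
end

section
/- Let h : [0,T] → ℝ have finite p-variation for some p ≥ 1, and let Δ = T/M for a positive integer M. Then ∫_0^T |h(y) − h((y)_Δ)| dy ≤ K · ‖h‖_{p-var,T} · (T^{(p−1)/p} Δ^{1/p} + Δ) for a universal constant K, where (y)_Δ = ⌊y/Δ⌋·Δ. -/
open MeasureTheory

lemma sum_range_two_mul' (F : ℕ → ℝ) (M : ℕ) :
    ∑ k ∈ Finset.range (2 * M), F k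
      = ∑ i ∈ Finset.range M, (F (2 * i) + F (2 * i + 1)) := by
  induction M with
  | zero => simp
  | succ m ih =>
      have h2 : 2 * (m + 1) = (2 * m + 1) + 1 := by ring
      rw [h2, Finset.sum_range_succ, Finset.sum_range_succ, ih, Finset.sum_range_succ]
      ring

/-- if `h` has finite `p`-variation on `[0,T]` (`p ≥ 1`) and
`Δ = T/M` for a positive integer `M`, then
`∫_0^T |h(y) − h((y)_Δ)| dy ≤ K·‖h‖_{p-var,T}·(T^{(p−1)/p} Δ^{1/p} + Δ)` for a
universal constant `K`, where `(y)_Δ = ⌊y/Δ⌋·Δ`. -/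
theorem stmt2 :
    ∃ K > (0:ℝ), ∀ (p T : ℝ) (M : ℕ) (h : ℝ → ℝ), 1 ≤ p → 0 < T → 0 < M →
      BddAbove (pVarSet p T h) →
      (∫ y in (0:ℝ)..T, |h y - h ((⌊y / (T / M)⌋ : ℝ) * (T / M))|) ≤
        K * pVarNorm p T h * (T ^ ((p - 1) / p) * (T / M) ^ (1 / p) + T / M) := by
  refine ⟨1, one_pos, ?_⟩
  intro p T M h hp hT hM hbdd
  have hM0 : (0:ℝ) < M := by exact_mod_cast hM
  set Δ : ℝ := T / M with hΔdef
  have hΔ : 0 < Δ := div_pos hT hM0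
  have hDM : Δ * (M : ℝ) = T := by rw [hΔdef]; field_simp
  have hp0 : 0 < p := lt_of_lt_of_le one_pos hp
  set N := pVarNorm p T h with hNdef
  set g : ℝ → ℝ := fun y => |h y - h ((⌊y / Δ⌋ : ℝ) * Δ)| with hgdef
  have hg0 : ∀ y, 0 ≤ g y := fun y => abs_nonneg _
  -- nonnegativity of N
  have hNnonneg : 0 ≤ N := by
    obtain ⟨v, hv⟩ : (pVarSet p T h).Nonempty := by
      refine ⟨_, 1, fun i => if i = 0 then 0 else T, one_pos, by norm_num, by norm_num,
        ?_, rfl⟩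
      intro i hi
      have hi0 : i = 0 := by omega
      subst hi0
      norm_num [hT]
    have hv' := hv
    obtain ⟨n, t, -, -, -, -, rfl⟩ := hv'
    exact (Real.rpow_nonneg
      (Finset.sum_nonneg fun i _ => Real.rpow_nonneg (abs_nonneg _) _) _).trans
      (le_csSup hbdd hv)
  have hRHSpos : 0 ≤ T ^ ((p - 1) / p) * Δ ^ (1 / p) + Δ := by positivity
  by_cases hint : IntervalIntegrable g volume 0 T
  · -- main case
    -- sub-lemma A : partition bound
    have hA : ∀ z : ℕ → ℝ,
        (∀ i, i < M → z i ∈ Set.Ioo ((i : ℝ) * Δ) (((i : ℝ) + 1) * Δ)) →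
        ∑ i ∈ Finset.range M, |h (z i) - h ((i : ℝ) * Δ)| ^ p ≤ N ^ p := by
      intro z hz
      set t : ℕ → ℝ := fun k => if k % 2 = 0 then ((k / 2 : ℕ) : ℝ) * Δ else z (k / 2)
        with htdef
      have hte : ∀ i : ℕ, t (2 * i) = (i : ℝ) * Δ := by
        intro i
        have h1 : (2 * i) % 2 = 0 := by omega
        have h2 : (2 * i) / 2 = i := by omega
        simp [htdef, h1, h2]
      have hto : ∀ i : ℕ, t (2 * i + 1) = z i := by
        intro i
        have h1 : (2 * i + 1) % 2 = 1 := by omega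
        have h2 : (2 * i + 1) / 2 = i := by omega
        simp [htdef, h1, h2]
      have ht0 : t 0 = 0 := by
        have h0 := hte 0
        norm_num at h0
        exact h0
      have htn : t (2 * M) = T := by
        rw [hte M, mul_comm]
        exact hDM
      have hmono : ∀ k, k < 2 * M → t k < t (k + 1) := by
        intro k hk
        rcases Nat.even_or_odd k with ⟨i, hi⟩ | ⟨i, hi⟩
        · have hiM : i < M := by omega
          have hk2 : k = 2 * i := by omega
          subst hk2
          rw [hte i, hto i]
          exact (hz i hiM).1
        · have hiM : i < M := by omega
          have hk2 : k = 2 * i + 1 := by omega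
          subst hk2
          rw [hto i, show 2 * i + 1 + 1 = 2 * (i + 1) from by ring, hte (i + 1)]
          have h2 := (hz i hiM).2
          push_cast
          linarith
      set S := ∑ k ∈ Finset.range (2 * M), |h (t (k + 1)) - h (t k)| ^ p with hSdef
      have hS0 : 0 ≤ S :=
        Finset.sum_nonneg fun i _ => Real.rpow_nonneg (abs_nonneg _) _
      have hmem : S ^ (1 / p) ∈ pVarSet p T h :=
        ⟨2 * M, t, by omega, ht0, htn, hmono, rfl⟩
      have h1 : S ^ (1 / p) ≤ N := le_csSup hbdd hmem
      have h2 : S ≤ N ^ p := by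
        have h3 : (S ^ (1 / p)) ^ p ≤ N ^ p :=
          Real.rpow_le_rpow (Real.rpow_nonneg hS0 _) h1 hp0.le
        rwa [← Real.rpow_mul hS0, one_div_mul_cancel hp0.ne', Real.rpow_one] at h3
      refine le_trans ?_ h2
      rw [hSdef, sum_range_two_mul' (fun k => |h (t (k + 1)) - h (t k)| ^ p) M]
      refine Finset.sum_le_sum fun i _ => ?_
      have e1 : t (2 * i + 1) = z i := hto i
      have e2 : t (2 * i) = (i : ℝ) * Δ := hte i
      simp only [e1, e2]
      exact le_add_of_nonneg_right (Real.rpow_nonneg (abs_nonneg _) _)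
    -- floor identity for points in the open subintervals
    have hfloor : ∀ (i : ℕ), ∀ zz ∈ Set.Ioo ((i : ℝ) * Δ) (((i : ℝ) + 1) * Δ),
        g zz = |h zz - h ((i : ℝ) * Δ)| := by
      intro i zz hzz
      have hfl : ⌊zz / Δ⌋ = (i : ℤ) := by
        rw [Int.floor_eq_iff]
        constructor
        · push_cast
          rw [le_div_iff₀ hΔ]
          exact hzz.1.le
        · push_cast
          rw [div_lt_iff₀ hΔ]
          exact hzz.2
      show |h zz - h ((⌊zz / Δ⌋ : ℝ) * Δ)| = _
      rw [hfl]
      norm_num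
    -- integrability on each subinterval
    have hsub : ∀ k, k < M →
        IntervalIntegrable g volume ((k : ℝ) * Δ) (((k : ℝ) + 1) * Δ) := by
      intro k hk
      refine hint.mono_set ?_
      rw [Set.uIcc_of_le hT.le,
        Set.uIcc_of_le (by nlinarith : (k : ℝ) * Δ ≤ ((k : ℝ) + 1) * Δ)]
      have hk1 : ((k : ℝ) + 1) ≤ M := by exact_mod_cast Nat.succ_le_of_lt hk
      apply Set.Icc_subset_Icc
      · positivity
      · have hle : ((k : ℝ) + 1) * Δ ≤ (M : ℝ) * Δ :=
          mul_le_mul_of_nonneg_right hk1 hΔ.le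
        nlinarith
    -- the key estimate for each ε > 0
    have key : ∀ ε : ℝ, 0 < ε →
        (∫ y in (0:ℝ)..T, g y) ≤ T ^ ((p - 1) / p) * Δ ^ (1 / p) * N + T * ε := by
      intro ε hε
      -- existence of good points
      have exz : ∀ i, i < M → ∃ zz : ℝ,
          zz ∈ Set.Ioo ((i : ℝ) * Δ) (((i : ℝ) + 1) * Δ) ∧
          (∫ y in ((i : ℝ) * Δ)..(((i : ℝ) + 1) * Δ), g y) ≤ (g zz + ε) * Δ := by
        intro i hi
        by_contra hcon
        push_neg at hcon
        set a : ℝ := (i : ℝ) * Δ with hadef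
        set b : ℝ := ((i : ℝ) + 1) * Δ with hbdef
        set I : ℝ := ∫ y in a..b, g y with hIdef
        have hab : a < b := by rw [hadef, hbdef]; nlinarith
        have hbound : ∀ zz ∈ Set.Ioo a b, g zz ≤ I / Δ - ε := by
          intro zz hzz
          have h2 : (g zz + ε) * Δ < I := hcon zz hzz
          have h3 := (lt_div_iff₀ hΔ).mpr h2
          linarith
        have hne : ((a + b) / 2) ∈ Set.Ioo a b := ⟨by linarith, by linarith⟩
        have hc0 : 0 ≤ I / Δ - ε := (hg0 _).trans (hbound _ hne)
        have hIoo : ‖∫ y in Set.Ioo a b, g y‖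
            ≤ (I / Δ - ε) * (volume (Set.Ioo a b)).toReal := by
          refine norm_setIntegral_le_of_norm_le_const ?_ ?_
          · rw [Real.volume_Ioo]; exact ENNReal.ofReal_lt_top
          · intro x hx
            rw [Real.norm_eq_abs, abs_of_nonneg (hg0 x)]
            exact hbound x hx
        have hvol : (volume (Set.Ioo a b)).toReal = Δ := by
          rw [Real.volume_Ioo, ENNReal.toReal_ofReal (by linarith)]
          rw [hadef, hbdef]; ring
        have hIle : I ≤ (I / Δ - ε) * Δ := by
          calc I = ∫ y in Set.Ioo a b, g y := by
                rw [hIdef, intervalIntegral.integral_of_le hab.le,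
                  MeasureTheory.integral_Ioc_eq_integral_Ioo]
            _ ≤ ‖∫ y in Set.Ioo a b, g y‖ := le_abs_self _
            _ ≤ (I / Δ - ε) * (volume (Set.Ioo a b)).toReal := hIoo
            _ = (I / Δ - ε) * Δ := by rw [hvol]
        have hID : (I / Δ - ε) * Δ = I - ε * Δ := by field_simp
        nlinarith
      choose! z hz1 hz2 using exz
      -- split the integral
      have hcast : ∀ k : ℕ, (((k + 1 : ℕ) : ℝ)) * Δ = ((k : ℝ) + 1) * Δ := by
        intro k; push_cast; ring
      have hadj : ∀ k, k < M → IntervalIntegrable g volume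
          ((fun k : ℕ => (k : ℝ) * Δ) k) ((fun k : ℕ => (k : ℝ) * Δ) (k + 1)) := by
        intro k hk
        show IntervalIntegrable g volume ((k : ℝ) * Δ) (((k + 1 : ℕ) : ℝ) * Δ)
        rw [hcast k]
        exact hsub k hk
      have hS := intervalIntegral.sum_integral_adjacent_intervals hadj
      have h00 : ((0 : ℕ) : ℝ) * Δ = 0 := by norm_num
      have hMT : ((M : ℕ) : ℝ) * Δ = T := by rw [mul_comm]; exact hDM
      rw [h00, hMT] at hS
      have hsplit : (∫ y in (0:ℝ)..T, g y)
          = ∑ k ∈ Finset.range M, ∫ y in ((k : ℝ) * Δ)..(((k : ℝ) + 1) * Δ), g y := by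
        rw [← hS]
        refine Finset.sum_congr rfl fun k _ => ?_
        rw [hcast k]
      rw [hsplit]
      set s : ℕ → ℝ := fun i => |h (z i) - h ((i : ℝ) * Δ)| with hsdef
      have step1 : ∑ k ∈ Finset.range M, (∫ y in ((k : ℝ) * Δ)..(((k : ℝ) + 1) * Δ), g y)
          ≤ ∑ k ∈ Finset.range M, (s k + ε) * Δ := by
        refine Finset.sum_le_sum fun i hi => ?_
        rw [Finset.mem_range] at hi
        have h2 := hz2 i hi
        rwa [hfloor i (z i) (hz1 i hi)] at h2
      have step2 : ∑ k ∈ Finset.range M, (s k + ε) * Δ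
          = Δ * (∑ k ∈ Finset.range M, s k) + (M : ℝ) * ε * Δ := by
        rw [Finset.sum_mul (Finset.range M) _ Δ |>.symm]
        rw [Finset.sum_add_distrib, Finset.sum_const, Finset.card_range, nsmul_eq_mul]
        ring
      -- Hölder / power-mean
      have hsum : ∑ k ∈ Finset.range M, s k ≤ (M : ℝ) * ((M : ℝ)⁻¹) ^ (1 / p) * N := by
        have hw : ∑ _i ∈ Finset.range M, (M : ℝ)⁻¹ = 1 := by
          rw [Finset.sum_const, Finset.card_range, nsmul_eq_mul]
          field_simp
        have hold := Real.arith_mean_le_rpow_mean (Finset.range M) (fun _ => (M : ℝ)⁻¹) s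
          (fun _ _ => by positivity) hw (fun i _ => abs_nonneg _) hp
        rw [← Finset.mul_sum, ← Finset.mul_sum] at hold
        have h2 : ((M : ℝ)⁻¹ * ∑ i ∈ Finset.range M, s i ^ p) ^ (1 / p)
            ≤ ((M : ℝ)⁻¹ * N ^ p) ^ (1 / p) := by
          apply Real.rpow_le_rpow
          · positivity
          · exact mul_le_mul_of_nonneg_left (hA z hz1) (by positivity)
          · positivity
        have h3 : ((M : ℝ)⁻¹ * N ^ p) ^ (1 / p) = ((M : ℝ)⁻¹) ^ (1 / p) * N := by
          rw [Real.mul_rpow (by positivity) (Real.rpow_nonneg hNnonneg p),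
            ← Real.rpow_mul hNnonneg, mul_one_div_cancel hp0.ne', Real.rpow_one]
        have h4 : (M : ℝ)⁻¹ * ∑ k ∈ Finset.range M, s k ≤ ((M : ℝ)⁻¹) ^ (1 / p) * N :=
          hold.trans (h2.trans_eq h3)
        calc ∑ k ∈ Finset.range M, s k
            = (M : ℝ) * ((M : ℝ)⁻¹ * ∑ k ∈ Finset.range M, s k) := by
              field_simp
          _ ≤ (M : ℝ) * (((M : ℝ)⁻¹) ^ (1 / p) * N) :=
              mul_le_mul_of_nonneg_left h4 hM0.le
          _ = (M : ℝ) * ((M : ℝ)⁻¹) ^ (1 / p) * N := by ring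
      -- algebra
      have hMinv : ((M : ℝ))⁻¹ = Δ / T := by rw [hΔdef]; field_simp
      have halg : Δ * ((M : ℝ) * ((M : ℝ)⁻¹) ^ (1 / p) * N)
          = T ^ ((p - 1) / p) * Δ ^ (1 / p) * N := by
        have hTp : T ^ ((p - 1) / p) = T / T ^ (1 / p) := by
          rw [show (p - 1) / p = 1 - 1 / p by field_simp, Real.rpow_sub hT, Real.rpow_one]
        rw [hMinv, Real.div_rpow hΔ.le hT.le, hTp]
        have hstep : Δ * ((M : ℝ) * (Δ ^ (1 / p) / T ^ (1 / p)) * N)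
            = (Δ * (M : ℝ)) * Δ ^ (1 / p) * N / T ^ (1 / p) := by ring
        rw [hstep, hDM]
        ring
      have hεT : (M : ℝ) * ε * Δ = T * ε := by
        rw [← hDM]; ring
      calc ∑ k ∈ Finset.range M, (∫ y in ((k : ℝ) * Δ)..(((k : ℝ) + 1) * Δ), g y)
          ≤ ∑ k ∈ Finset.range M, (s k + ε) * Δ := step1
        _ = Δ * (∑ k ∈ Finset.range M, s k) + (M : ℝ) * ε * Δ := step2
        _ ≤ Δ * ((M : ℝ) * ((M : ℝ)⁻¹) ^ (1 / p) * N) + (M : ℝ) * ε * Δ := by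
            have := mul_le_mul_of_nonneg_left hsum hΔ.le
            linarith
        _ = T ^ ((p - 1) / p) * Δ ^ (1 / p) * N + T * ε := by rw [halg, hεT]
    have hmain : (∫ y in (0:ℝ)..T, g y) ≤ T ^ ((p - 1) / p) * Δ ^ (1 / p) * N :=
      le_of_forall_pos_le_add fun ε hε => by
        have hk := key (ε / T) (div_pos hε hT)
        rwa [show T * (ε / T) = ε by field_simp] at hk
    refine hmain.trans ?_
    rw [one_mul]
    have hcomm : T ^ ((p - 1) / p) * Δ ^ (1 / p) * N
        = N * (T ^ ((p - 1) / p) * Δ ^ (1 / p)) := by ring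
    rw [hcomm]
    exact mul_le_mul_of_nonneg_left (le_add_of_nonneg_right hΔ.le) hNnonneg
  · rw [intervalIntegral.integral_undef hint, one_mul]
    exact mul_nonneg hNnonneg hRHSpos
end

section
/- Let f : [0,∞) → [0,∞) be measurable and locally bounded, a ∈ L¹([0,∞)) nonnegative with ‖a‖_1 < 1, and C ≥ 0. If f(t) ≤ C + ∫_0^t a(t−s) f(s) ds for all t ≥ 0, then f(t) ≤ C/(1 − ‖a‖_1) for all t ≥ 0. -/
open MeasureTheory

/-- convolution renewal inequality. If `f ≥ 0` is measurable and
locally bounded, `a ≥ 0` is integrable on `[0,∞)` with `∫ a < 1`, `C ≥ 0`, and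
`f(t) ≤ C + ∫_0^t a(t−s) f(s) ds` for all `t ≥ 0`, then
`f(t) ≤ C/(1 − ‖a‖₁)` for all `t ≥ 0`. -/
theorem stmt6 (C : ℝ) (hC : 0 ≤ C) (a f : ℝ → ℝ)
    (ha0 : ∀ t, 0 ≤ a t) (haint : IntegrableOn a (Set.Ici 0))
    (ha1 : (∫ s in Set.Ici (0:ℝ), a s) < 1)
    (hf0 : ∀ t, 0 ≤ f t) (hfm : Measurable f)
    (hfb : ∀ T > (0:ℝ), ∃ B, ∀ t ∈ Set.Icc (0:ℝ) T, f t ≤ B)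
    (hrec : ∀ t ≥ (0:ℝ), f t ≤ C + ∫ s in (0:ℝ)..t, a (t - s) * f s) :
    ∀ t ≥ (0:ℝ), f t ≤ C / (1 - ∫ s in Set.Ici (0:ℝ), a s) := by
  set A : ℝ := ∫ s in Set.Ici (0:ℝ), a s with hA
  have hA0 : 0 ≤ A := setIntegral_nonneg measurableSet_Ici fun x _ => ha0 x
  have h1A : (0:ℝ) < 1 - A := by linarith
  set K : ℝ := C / (1 - A) with hK
  have hK0 : 0 ≤ K := div_nonneg hC h1A.le
  have hKfix : C + A * K = K := by
    rw [hK, eq_div_iff h1A.ne', add_mul, mul_assoc, div_mul_cancel₀ _ h1A.ne']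
    ring
  intro t₀ ht₀
  set T : ℝ := t₀ + 1 with hT
  have hTpos : (0:ℝ) < T := by linarith
  obtain ⟨B, hB⟩ := hfb T hTpos
  set r : ℝ := max (B - K) 0 with hr
  have hr0 : 0 ≤ r := le_max_right _ _
  -- partial integrals of a are bounded by A
  have hpart : ∀ t : ℝ, 0 ≤ t → (∫ u in (0:ℝ)..t, a u) ≤ A := by
    intro t ht
    rw [intervalIntegral.integral_of_le ht]
    exact setIntegral_mono_set haint
      (Filter.Eventually.of_forall fun x => ha0 x)
      (HasSubset.Subset.eventuallyLE (fun x hx => hx.1.le))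
  -- key step
  have key : ∀ D : ℝ, 0 ≤ D → (∀ s ∈ Set.Icc (0:ℝ) T, f s ≤ D) →
      ∀ s ∈ Set.Icc (0:ℝ) T, f s ≤ C + A * D := by
    intro D hD hfD t ht
    obtain ⟨ht0, htT⟩ := ht
    have hai : IntervalIntegrable a volume 0 t := by
      rw [intervalIntegrable_iff_integrableOn_Ioc_of_le ht0]
      exact haint.mono_set (fun x hx => hx.1.le)
    have hai' : IntervalIntegrable (fun s => a (t - s)) volume 0 t := by
      have := (hai.comp_sub_left t).symm
      simpa using this
    have haiD : IntervalIntegrable (fun s => a (t - s) * D) volume 0 t :=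
      hai'.mul_const D
    have hprod : IntervalIntegrable (fun s => a (t - s) * f s) volume 0 t := by
      rw [intervalIntegrable_iff_integrableOn_Ioc_of_le ht0] at hai' ⊢
      refine Integrable.mono' (hai'.mul_const D)
        ((hai'.aestronglyMeasurable.mul (hfm.aestronglyMeasurable.restrict))) ?_
      refine (ae_restrict_iff' measurableSet_Ioc).2 (Filter.Eventually.of_forall ?_)
      intro x hx
      have hfx : f x ≤ D := hfD x ⟨hx.1.le, hx.2.trans (by linarith)⟩
      have : |a (t - x) * f x| = a (t - x) * f x := by
        rw [abs_of_nonneg (mul_nonneg (ha0 _) (hf0 _))]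
      rw [Real.norm_eq_abs, this]
      exact mul_le_mul_of_nonneg_left hfx (ha0 _)
    have h1 : (∫ s in (0:ℝ)..t, a (t - s) * f s) ≤ ∫ s in (0:ℝ)..t, a (t - s) * D := by
      refine intervalIntegral.integral_mono_on ht0 hprod haiD ?_
      intro x hx
      exact mul_le_mul_of_nonneg_left (hfD x ⟨hx.1, hx.2.trans (by linarith)⟩) (ha0 _)
    have h2 : (∫ s in (0:ℝ)..t, a (t - s) * D) = (∫ u in (0:ℝ)..t, a u) * D := by
      rw [intervalIntegral.integral_mul_const]
      congr 1
      rw [intervalIntegral.integral_comp_sub_left a t]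
      simp
    have h3 : (∫ u in (0:ℝ)..t, a u) * D ≤ A * D :=
      mul_le_mul_of_nonneg_right (hpart t ht0) hD
    have := hrec t ht0
    calc f t ≤ C + ∫ s in (0:ℝ)..t, a (t - s) * f s := this
      _ ≤ C + A * D := by linarith [h1, h2 ▸ h3, h2]
  -- induction
  have bnd : ∀ n : ℕ, ∀ s ∈ Set.Icc (0:ℝ) T, f s ≤ K + A ^ n * r := by
    intro n
    induction n with
    | zero =>
      intro s hs
      have : B ≤ K + r := by
        have := le_max_left (B - K) 0
        linarith [this]
      simpa using (hB s hs).trans (by simpa using this)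
    | succ n ih =>
      have hD0 : 0 ≤ K + A ^ n * r :=
        add_nonneg hK0 (mul_nonneg (pow_nonneg hA0 n) hr0)
      intro s hs
      have := key (K + A ^ n * r) hD0 ih s hs
      calc f s ≤ C + A * (K + A ^ n * r) := this
        _ = K + A ^ (n + 1) * r := by rw [mul_add, ← add_assoc, hKfix]; ring
  have ht₀T : t₀ ∈ Set.Icc (0:ℝ) T := ⟨ht₀, by linarith⟩
  have hlim : Filter.Tendsto (fun n : ℕ => K + A ^ n * r) Filter.atTop (nhds K) := by
    have : Filter.Tendsto (fun n : ℕ => A ^ n) Filter.atTop (nhds 0) :=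
      tendsto_pow_atTop_nhds_zero_of_lt_one hA0 ha1
    have := ((this.mul_const r).const_add K)
    simpa using this
  exact ge_of_tendsto' hlim fun n => bnd n t₀ ht₀T
end

section
/- Let h : [0,T] → ℝ have finite p-variation for some p ≥ 1 and let Δ = T/M. Then ∫_0^{T−Δ} |h((t)_Δ + Δ) − h(t)| dt ≤ ‖h‖_{p-var,T} · T^{(p−1)/p} · Δ^{1/p}. -/
open MeasureTheory

open Finset in
lemma hoelder_sum {p : ℝ} (hp : 1 ≤ p) (N : ℕ) (z : ℕ → ℝ) (hz : ∀ k, 0 ≤ z k) :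
    ∑ k ∈ Finset.range N, z k ≤
      (N:ℝ) ^ (1 - 1/p) * (∑ k ∈ Finset.range N, z k ^ p) ^ (1/p) := by
  rcases Nat.eq_zero_or_pos N with hN | hN
  · simp [hN]
    positivity
  have hNpos : (0:ℝ) < N := Nat.cast_pos.mpr hN
  have hw : ∑ _k ∈ range N, ((N:ℝ)⁻¹) = 1 := by
    simp [Finset.sum_const]
    field_simp
  have key := Real.arith_mean_le_rpow_mean (range N) (fun _ => (N:ℝ)⁻¹) z
    (fun i _ => by positivity) hw (fun i _ => hz i) hp
  rw [← Finset.mul_sum, ← Finset.mul_sum] at key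
  have hB : (0:ℝ) ≤ ∑ k ∈ range N, z k ^ p :=
    Finset.sum_nonneg fun k _ => Real.rpow_nonneg (hz k) p
  have h2 : ((N:ℝ)⁻¹ * ∑ k ∈ range N, z k ^ p) ^ (1/p)
      = (N:ℝ) ^ (-(1/p)) * (∑ k ∈ range N, z k ^ p) ^ (1/p) := by
    rw [Real.mul_rpow (by positivity) hB, ← Real.rpow_neg_one,
      ← Real.rpow_mul hNpos.le]
    norm_num
  rw [h2] at key
  calc ∑ k ∈ range N, z k
      = (N:ℝ) * ((N:ℝ)⁻¹ * ∑ k ∈ range N, z k) := by field_simp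
    _ ≤ (N:ℝ) * ((N:ℝ) ^ (-(1/p)) * (∑ k ∈ range N, z k ^ p) ^ (1/p)) :=
        mul_le_mul_of_nonneg_left key hNpos.le
    _ = (N:ℝ) ^ (1 - 1/p) * (∑ k ∈ range N, z k ^ p) ^ (1/p) := by
        rw [← mul_assoc]
        congr 1
        rw [mul_comm, ← Real.rpow_add_one hNpos.ne']
        ring_nf


/-- if `h` has finite `p`-variation on `[0,T]` (`p ≥ 1`) and
`Δ = T/M`, then `∫_0^{T−Δ} |h((t)_Δ + Δ) − h(t)| dt
  ≤ ‖h‖_{p-var,T} · T^{(p−1)/p} · Δ^{1/p}`, with `(t)_Δ = ⌊t/Δ⌋·Δ`. -/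
theorem stmt18 (p T : ℝ) (M : ℕ) (h : ℝ → ℝ) (hp : 1 ≤ p) (hT : 0 < T) (hM : 0 < M)
    (hvar : BddAbove (pVarSet p T h)) :
    (∫ t in (0:ℝ)..(T - T / M), |h ((⌊t / (T / M)⌋ : ℝ) * (T / M) + T / M) - h t|) ≤
      pVarNorm p T h * T ^ ((p - 1) / p) * (T / M) ^ (1 / p) := by
  classical
  have hppos : (0:ℝ) < p := lt_of_lt_of_le one_pos hp
  set Δ : ℝ := T / M with hΔdef
  set V : ℝ := pVarNorm p T h with hVdef
  have hMpos : (0:ℝ) < M := Nat.cast_pos.mpr hM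
  have hΔ : 0 < Δ := div_pos hT hMpos
  set F : ℝ → ℝ := fun t => |h ((⌊t / Δ⌋ : ℝ) * Δ + Δ) - h t| with hFdef
  -- V ≥ 0
  have hV0 : 0 ≤ V := by
    have hmem : (∑ i ∈ Finset.range 1, |h ((fun i : ℕ => if i = 0 then 0 else T) (i+1))
        - h ((fun i : ℕ => if i = 0 then 0 else T) i)| ^ p) ^ (1/p) ∈ pVarSet p T h := by
      refine ⟨1, fun i => if i = 0 then 0 else T, one_pos, by simp, by simp, ?_, rfl⟩
      intro i hi
      interval_cases i
      simpa using hT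
    exact le_trans (Real.rpow_nonneg (Finset.sum_nonneg fun i _ =>
      Real.rpow_nonneg (abs_nonneg _) p) _) (le_csSup hvar hmem)
  have hRHS0 : 0 ≤ V * T ^ ((p - 1) / p) * Δ ^ (1 / p) := by positivity
  by_cases hint : IntervalIntegrable F volume 0 (T - Δ)
  swap
  · rw [intervalIntegral.integral_undef hint]; exact hRHS0
  set N : ℕ := M - 1 with hNdef
  have hMN : (M:ℝ) = (N:ℝ) + 1 := by
    have : N + 1 = M := Nat.succ_pred_eq_of_pos hM
    exact_mod_cast this.symm
  have hTN : T - Δ = (N:ℝ) * Δ := by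
    have hTM : T = (M:ℝ) * Δ := by rw [hΔdef]; field_simp
    rw [hTM, hMN]; ring
  -- the grid
  have hgrid : ∀ k : ℕ, ((k:ℝ) * Δ) ≤ ((k:ℝ)+1) * Δ := by
    intro k; nlinarith [hΔ]
  have hintk : ∀ k < N, IntervalIntegrable F volume ((k:ℝ) * Δ) (((k:ℝ)+1) * Δ) := by
    intro k hk
    refine hint.mono_set ?_
    rw [Set.uIcc_of_le (hgrid k), Set.uIcc_of_le (by rw [hTN]; positivity)]
    apply Set.Icc_subset_Icc
    · positivity
    · rw [hTN]
      have : (k:ℝ) + 1 ≤ (N:ℝ) := by exact_mod_cast hk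
      nlinarith [hΔ]
  set I : ℕ → ℝ := fun k => ∫ t in ((k:ℝ) * Δ)..(((k:ℝ)+1) * Δ), F t with hIdef
  have hsplit : (∫ t in (0:ℝ)..(T - Δ), F t) = ∑ k ∈ Finset.range N, I k := by
    rw [hTN]
    have := intervalIntegral.sum_integral_adjacent_intervals (μ := volume)
      (f := F) (a := fun k : ℕ => (k:ℝ) * Δ) (n := N) ?_
    · rw [show ((0:ℕ):ℝ) * Δ = 0 by norm_num] at this
      rw [← this]
      apply Finset.sum_congr rfl
      intro k _
      simp only [hIdef]
      norm_num
    · intro k hk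
      have := hintk k hk
      push_cast
      convert this using 2
  have hInonneg : ∀ k, 0 ≤ I k := by
    intro k
    exact intervalIntegral.integral_nonneg (hgrid k) (fun t _ => abs_nonneg _)
  -- floor identity
  have hfloor : ∀ k : ℕ, ∀ t ∈ Set.Ioo ((k:ℝ) * Δ) (((k:ℝ)+1) * Δ),
      F t = |h (((k:ℝ)+1) * Δ) - h t| := by
    intro k t ht
    have h1 : (k:ℝ) ≤ t / Δ := le_of_lt ((lt_div_iff₀ hΔ).mpr (by linarith [ht.1]))
    have h2 : t / Δ < (k:ℝ) + 1 := (div_lt_iff₀ hΔ).mpr (by linarith [ht.2])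
    have hfl : ⌊t / Δ⌋ = (k:ℤ) := by
      rw [Int.floor_eq_iff]
      constructor <;> [exact_mod_cast h1; exact_mod_cast h2]
    simp only [hFdef, hfl]
    push_cast
    ring_nf
  have hmain : ∀ ε > 0, ∑ k ∈ Finset.range N, I k ≤ Δ * ((N:ℝ) ^ (1 - 1/p) * V) + Δ * N * ε := by
    intro ε hε
    have hτex : ∀ k : ℕ, ∃ x : ℝ, k < N → x ∈ Set.Ioo ((k:ℝ)*Δ) (((k:ℝ)+1)*Δ) ∧
        I k / Δ - ε < |h (((k:ℝ)+1)*Δ) - h x| := by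
      intro k
      by_cases hk : k < N
      swap
      · exact ⟨0, fun hcon => absurd hcon hk⟩
      by_contra hcon
      push_neg at hcon
      have hae : F ≤ᵐ[volume.restrict (Set.Icc ((k:ℝ)*Δ) (((k:ℝ)+1)*Δ))]
          fun _ => I k / Δ - ε := by
        rw [Filter.EventuallyLE, MeasureTheory.ae_restrict_iff' measurableSet_Icc]
        filter_upwards [Filter.eventuallyEq_set.mp
          (MeasureTheory.Ioo_ae_eq_Icc (μ := volume) (a := (k:ℝ)*Δ) (b := ((k:ℝ)+1)*Δ))]
          with x hx hxIcc
        have hxIoo : x ∈ Set.Ioo ((k:ℝ)*Δ) (((k:ℝ)+1)*Δ) := hx.mpr hxIcc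
        rw [hfloor k x hxIoo]
        exact ((hcon x).2 hxIoo)
      have hIk : I k ≤ (I k / Δ - ε) * Δ := by
        have hcmp := intervalIntegral.integral_mono_ae_restrict (hgrid k) (hintk k hk)
          (intervalIntegrable_const (c := I k / Δ - ε)) hae
        calc I k ≤ ∫ _t in ((k:ℝ)*Δ)..(((k:ℝ)+1)*Δ), (I k / Δ - ε) := hcmp
          _ = (I k / Δ - ε) * Δ := by
            rw [intervalIntegral.integral_const, smul_eq_mul]; ring
      have heq : (I k / Δ - ε) * Δ = I k - ε * Δ := by
        rw [sub_mul, div_mul_cancel₀ _ hΔ.ne']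
      rw [heq] at hIk
      nlinarith [mul_pos hε hΔ]
    choose τ hτ using hτex
    set s : ℕ → ℝ := fun i => if i = 2*N+1 then T
      else if i % 2 = 0 then ((i/2 : ℕ):ℝ) * Δ else τ (i/2) with hsdef
    have hs0 : s 0 = 0 := by
      have h1 : ¬(0 = 2*N+1) := by omega
      have h2 : 0 % 2 = 0 := rfl
      simp only [hsdef]
      rw [if_neg h1]
      norm_num
    have hseven : ∀ k, k ≤ N → s (2*k) = (k:ℝ)*Δ := by
      intro k hk
      have h1 : ¬(2*k = 2*N+1) := by omega
      have h2 : (2*k) % 2 = 0 := by omega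
      have h3 : (2*k)/2 = k := by omega
      simp only [hsdef]
      rw [if_neg h1]
      simp [Nat.mul_mod_right, h3]
    have hsodd : ∀ k, k < N → s (2*k+1) = τ k := by
      intro k hk
      have h1 : ¬(2*k+1 = 2*N+1) := by omega
      have h2 : ¬((2*k+1) % 2 = 0) := by omega
      have h3 : (2*k+1)/2 = k := by omega
      simp only [hsdef]
      have h2' : (2*k+1) % 2 = 1 := by omega
      rw [if_neg h1]
      simp [h2', h3]
    have hslast : s (2*N+1) = T := by simp [hsdef]
    have hmono : ∀ i < 2*N+1, s i < s (i+1) := by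
      intro i hi
      rcases Nat.even_or_odd i with ⟨k, hk⟩ | ⟨k, hk⟩
      · have hik : i = 2*k := by omega
        subst hik
        by_cases hkN : k < N
        · rw [hseven k hkN.le, show 2*k+1 = 2*k+1 from rfl, hsodd k hkN]
          exact (hτ k hkN).1.1
        · have hkeq : k = N := by omega
          subst hkeq
          rw [hseven N le_rfl, show 2*N+1 = 2*N+1 from rfl, hslast]
          rw [← hTN]
          linarith
      · have hkN : k < N := by omega
        have hik : i = 2*k+1 := by omega
        subst hik
        rw [hsodd k hkN, show 2*k+1+1 = 2*(k+1) from rfl, hseven (k+1) hkN]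
        have := (hτ k hkN).1.2
        push_cast
        linarith
    set S : ℝ := ∑ i ∈ Finset.range (2*N+1), |h (s (i+1)) - h (s i)| ^ p with hSdef
    have hS0 : 0 ≤ S :=
      Finset.sum_nonneg fun i _ => Real.rpow_nonneg (abs_nonneg _) p
    have hSmem : S ^ (1/p) ∈ pVarSet p T h :=
      ⟨2*N+1, s, by omega, hs0, hslast, hmono, rfl⟩
    have hSV : S ≤ V ^ p := by
      have h1 : S ^ (1/p) ≤ V := le_csSup hvar hSmem
      have h2 := Real.rpow_le_rpow (Real.rpow_nonneg hS0 _) h1 hppos.le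
      rwa [← Real.rpow_mul hS0, one_div_mul_cancel hppos.ne', Real.rpow_one] at h2
    set b : ℕ → ℝ := fun k => max (I k / Δ - ε) 0 with hbdef
    have hb0 : ∀ k, 0 ≤ b k := fun k => le_max_right _ _
    have hbτ : ∀ k < N, b k ≤ |h (s (2*k+2)) - h (s (2*k+1))| := by
      intro k hk
      rw [hsodd k hk, show 2*k+2 = 2*(k+1) from rfl, hseven (k+1) hk]
      push_cast
      exact max_le (hτ k hk).2.le (abs_nonneg _)
    have hbS : ∑ k ∈ Finset.range N, b k ^ p ≤ S := by
      calc ∑ k ∈ Finset.range N, b k ^ p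
          ≤ ∑ k ∈ Finset.range N, |h (s (2*k+1+1)) - h (s (2*k+1))| ^ p := by
            apply Finset.sum_le_sum
            intro k hk
            exact Real.rpow_le_rpow (hb0 k) (hbτ k (Finset.mem_range.mp hk)) hppos.le
        _ = ∑ i ∈ (Finset.range N).image (fun k => 2*k+1),
              |h (s (i+1)) - h (s i)| ^ p := by
            rw [Finset.sum_image (by intro a _ c _ hac; simp only at hac; omega)]
        _ ≤ S := by
            apply Finset.sum_le_sum_of_subset_of_nonneg
            · intro i hi
              simp only [Finset.mem_image, Finset.mem_range] at hi ⊢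
              obtain ⟨k, hk, rfl⟩ := hi
              omega
            · intro i _ _
              exact Real.rpow_nonneg (abs_nonneg _) p
    have hH := hoelder_sum hp N b hb0
    have hBV : ∑ k ∈ Finset.range N, b k ≤ (N:ℝ) ^ (1 - 1/p) * V := by
      refine hH.trans (mul_le_mul_of_nonneg_left ?_ (Real.rpow_nonneg (Nat.cast_nonneg N) _))
      calc (∑ k ∈ Finset.range N, b k ^ p) ^ (1/p)
          ≤ (V ^ p) ^ (1/p) := Real.rpow_le_rpow
            (Finset.sum_nonneg fun k _ => Real.rpow_nonneg (hb0 k) p)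
            (hbS.trans hSV) (by positivity)
        _ = V := by
            rw [← Real.rpow_mul hV0, mul_one_div_cancel hppos.ne', Real.rpow_one]
    calc ∑ k ∈ Finset.range N, I k
        ≤ ∑ k ∈ Finset.range N, (b k + ε) * Δ := by
          apply Finset.sum_le_sum
          intro k _
          have h1 : I k / Δ ≤ b k + ε := by
            have := le_max_left (I k / Δ - ε) 0
            linarith
          calc I k = (I k / Δ) * Δ := by field_simp
            _ ≤ (b k + ε) * Δ := mul_le_mul_of_nonneg_right h1 hΔ.le
      _ = Δ * (∑ k ∈ Finset.range N, b k) + Δ * N * ε := by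
          rw [← Finset.sum_mul, Finset.sum_add_distrib, Finset.sum_const,
            Finset.card_range, nsmul_eq_mul]
          ring
      _ ≤ Δ * ((N:ℝ) ^ (1 - 1/p) * V) + Δ * N * ε := by
          have := mul_le_mul_of_nonneg_left hBV hΔ.le
          linarith
  have hbound : ∑ k ∈ Finset.range N, I k ≤ Δ * ((N:ℝ) ^ (1 - 1/p) * V) := by
    rcases Nat.eq_zero_or_pos N with hN0 | hNpos
    · simp [hN0]
      positivity
    · have hDN : 0 < Δ * (N:ℝ) := mul_pos hΔ (Nat.cast_pos.mpr hNpos)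
      refine le_of_forall_pos_le_add ?_
      intro δ hδ
      have hm := hmain (δ / (Δ * N)) (div_pos hδ hDN)
      calc ∑ k ∈ Finset.range N, I k
          ≤ Δ * ((N:ℝ) ^ (1 - 1/p) * V) + Δ * N * (δ / (Δ * N)) := hm
        _ = Δ * ((N:ℝ) ^ (1 - 1/p) * V) + δ := by
            congr 1
            field_simp
  calc (∫ t in (0:ℝ)..(T - Δ), F t) = ∑ k ∈ Finset.range N, I k := hsplit
    _ ≤ Δ * ((N:ℝ) ^ (1 - 1/p) * V) := hbound
    _ ≤ V * T ^ ((p - 1) / p) * Δ ^ (1 / p) := by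
        have e1 : 1 - 1/p = (p-1)/p := by field_simp
        have e2 : Δ = Δ ^ ((p-1)/p) * Δ ^ (1/p) := by
          rw [← Real.rpow_add hΔ, ← add_div]
          norm_num [div_self hppos.ne']
        have e3 : (N:ℝ) ^ ((p-1)/p) * Δ ^ ((p-1)/p) = ((N:ℝ)*Δ) ^ ((p-1)/p) :=
          (Real.mul_rpow (Nat.cast_nonneg N) hΔ.le).symm
        have e4 : ((N:ℝ)*Δ) ^ ((p-1)/p) ≤ T ^ ((p-1)/p) := by
          apply Real.rpow_le_rpow (by positivity) _ (div_nonneg (by linarith) hppos.le)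
          rw [← hTN]; linarith
        calc Δ * ((N:ℝ) ^ (1-1/p) * V)
            = ((N:ℝ)^((p-1)/p) * Δ^((p-1)/p)) * V * Δ^(1/p) := by
              rw [e1]
              nth_rewrite 1 [e2]
              ring
          _ = ((N:ℝ)*Δ)^((p-1)/p) * V * Δ^(1/p) := by rw [e3]
          _ ≤ T^((p-1)/p) * V * Δ^(1/p) := by
              apply mul_le_mul_of_nonneg_right
                (mul_le_mul_of_nonneg_right e4 hV0) (by positivity)
          _ = V * T^((p-1)/p) * Δ^(1/p) := by ring
end
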